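/- Let G be a finite group and S its simplex in R[G]. For x ∈ S with n_x finite, let G_x = ⟨Supp(x^{n_x})⟩ ≤ G, c_x = (1/|G_x|) Σ_{g∈G_x} g, and m_x = min{k : Supp(x^k) ⊆ G_x}. For nonnegative integers r₁, r₂, one has c_x x^{r₁} = c_x x^{r₂} if and only if r₁ ≡ r₂ (mod m_x). -/

import Mathlib

open Filter Topology

open scoped Classical Pointwise


private lemma pow_coeff_nonneg {G : Type*} [Group G] (x : MonoidAlgebra ℝ G)
    (hx0 : ∀ g, 0 ≤ x.coeff g) : ∀ (k : ℕ) (g : G), 0 ≤ (x ^ k).coeff g := by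
  intro k
  induction k with
  | zero =>
    intro g
    rw [pow_zero, MonoidAlgebra.one_def]
    rw [MonoidAlgebra.coeff_single, Finsupp.single_apply]
    split <;> norm_num
  | succ k ih =>
    intro g
    rw [pow_succ, MonoidAlgebra.coeff_mul_apply_left]
    apply Finset.sum_nonneg
    intro a _
    exact mul_nonneg (ih a) (hx0 _)

private lemma pow_coeff_sum {G : Type*} [Group G] [Fintype G] (x : MonoidAlgebra ℝ G)
    (hx1 : ∑ g : G, x.coeff g = 1) : ∀ k : ℕ, ∑ g : G, (x ^ k).coeff g = 1 := by
  have key : ∀ y : MonoidAlgebra ℝ G, ∑ g : G, y.coeff g = (MonoidAlgebra.lift ℝ ℝ G) 1 y := by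
    intro y
    rw [MonoidAlgebra.lift_apply]
    rw [Finsupp.sum_fintype]
    · simp
    · intro i; simp
  intro k
  rw [key, map_pow, ← key, hx1, one_pow]

private lemma support_mul_eq {G : Type*} [Group G] (f g : MonoidAlgebra ℝ G)
    (hf : ∀ a, 0 ≤ f.coeff a) (hg : ∀ a, 0 ≤ g.coeff a) :
    (f * g).coeff.support = f.coeff.support * g.coeff.support := by
  apply Finset.Subset.antisymm
  · exact MonoidAlgebra.support_coeff_mul_subset f g
  · intro a ha
    obtain ⟨u, hu, v, hv, rfl⟩ := Finset.mem_mul.1 ha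
    rw [Finsupp.mem_support_iff]
    apply ne_of_gt
    rw [MonoidAlgebra.coeff_mul_apply_left, Finsupp.sum]
    apply Finset.sum_pos'
    · intro i _
      exact mul_nonneg (hf i) (hg _)
    · refine ⟨u, hu, ?_⟩
      have h1 : 0 < f.coeff u := lt_of_le_of_ne (hf u) (Ne.symm (Finsupp.mem_support_iff.1 hu))
      have h2 : 0 < g.coeff v := lt_of_le_of_ne (hg v) (Ne.symm (Finsupp.mem_support_iff.1 hv))
      simpa using mul_pos h1 h2

private lemma support_pow_eq {G : Type*} [Group G] (x : MonoidAlgebra ℝ G)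
    (hx0 : ∀ g, 0 ≤ x.coeff g) : ∀ k : ℕ, (x ^ k).coeff.support = x.coeff.support ^ k := by
  intro k
  induction k with
  | zero =>
    rw [pow_zero, pow_zero, MonoidAlgebra.one_def]
    rw [MonoidAlgebra.coeff_single, Finsupp.support_single_ne_zero _ one_ne_zero]
    rfl
  | succ k ih =>
    rw [pow_succ, support_mul_eq _ _ (pow_coeff_nonneg x hx0 k) hx0, ih, pow_succ]

open scoped Classical in
/-- For `x` in the simplex of `R[G]`, with `n_x = min{k ≥ 1 : (x^k)_e ≠ 0}`,
`G_x = ⟨Supp(x^{n_x})⟩`, `c_x = (1/|G_x|) Σ_{g∈G_x} g`, and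
`m_x = min{k ≥ 1 : Supp(x^k) ⊆ G_x}`, one has
`c_x x^{r₁} = c_x x^{r₂}` iff `r₁ ≡ r₂ (mod m_x)`. -/
theorem stmt5 {G : Type*} [Group G] [Fintype G]
    (x : MonoidAlgebra ℝ G) (hx1 : ∑ g : G, x.coeff g = 1) (hx0 : ∀ g, 0 ≤ x.coeff g)
    (n : ℕ) (hn : IsLeast {k : ℕ | 0 < k ∧ (x ^ k).coeff (1 : G) ≠ 0} n)
    (H : Subgroup G) (hH : H = Subgroup.closure ((x ^ n).coeff.support : Set G))
    (c : MonoidAlgebra ℝ G)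
    (hc : c = (Nat.card H : ℝ)⁻¹ •
      ∑ g ∈ Finset.univ.filter (· ∈ H), MonoidAlgebra.single g (1 : ℝ))
    (m : ℕ) (hm : IsLeast {k : ℕ | 0 < k ∧ ((x ^ k).coeff.support : Set G) ⊆ (H : Set G)} m)
    (r₁ r₂ : ℕ) :
    c * x ^ r₁ = c * x ^ r₂ ↔ r₁ ≡ r₂ [MOD m] := by
  obtain ⟨⟨hn0, hne⟩, hnle⟩ := hn
  obtain ⟨⟨hm0, hms⟩, hmle⟩ := hm
  set T := x.coeff.support with hT
  have hnn : ∀ (k : ℕ) (g : G), 0 ≤ (x ^ k).coeff g := pow_coeff_nonneg x hx0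
  have hsum : ∀ k : ℕ, ∑ g : G, (x ^ k).coeff g = 1 := pow_coeff_sum x hx1
  have hsupp : ∀ k : ℕ, (x ^ k).coeff.support = T ^ k := support_pow_eq x hx0
  have hxne : T.Nonempty := by
    rw [hT, Finsupp.support_nonempty_iff]
    intro h
    rw [h] at hx1
    simp at hx1
  have h1n : (1 : G) ∈ T ^ n := by rw [← hsupp]; exact Finsupp.mem_support_iff.2 hne
  have hTn_sub : ∀ g ∈ T ^ n, g ∈ H := by
    intro g hg
    rw [hH]
    exact Subgroup.subset_closure (by rw [hsupp]; exact_mod_cast hg)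
  have hTm_sub : ∀ g ∈ T ^ m, g ∈ H := by
    intro g hg
    exact hms (by rw [hsupp]; exact_mod_cast hg)
  -- products of multiples land in H
  have hmul_sub : ∀ a : ℕ, (∀ g ∈ T ^ a, g ∈ H) → ∀ q : ℕ, ∀ g ∈ T ^ (a * q), g ∈ H := by
    intro a ha q
    induction q with
    | zero =>
      intro g hg
      rw [mul_zero, pow_zero, Finset.mem_one] at hg
      exact hg ▸ H.one_mem
    | succ q ih =>
      intro g hg
      rw [mul_add, mul_one, pow_add] at hg
      obtain ⟨u, hu, v, hv, rfl⟩ := Finset.mem_mul.1 hg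
      exact H.mul_mem (ih u hu) (ha v hv)
  -- subset of H implies m ∣ k
  have hdvd_of_sub : ∀ k : ℕ, (∀ g ∈ T ^ k, g ∈ H) → m ∣ k := by
    intro k hk
    rcases Nat.eq_zero_or_pos (k % m) with hs | hs
    · exact Nat.dvd_of_mod_eq_zero hs
    · exfalso
      have hdecomp : m * (k / m) + k % m = k := Nat.div_add_mod k m
      obtain ⟨h0, hh0⟩ : (T ^ (m * (k / m))).Nonempty := hxne.pow
      have hsub : ∀ g ∈ T ^ (k % m), g ∈ H := by
        intro g hg
        have hmem : h0 * g ∈ T ^ k := by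
          rw [← hdecomp, pow_add]
          exact Finset.mul_mem_mul hh0 hg
        have h2 := hk _ hmem
        have h3 : h0 ∈ H := hmul_sub m hTm_sub (k / m) h0 hh0
        simpa using H.mul_mem (H.inv_mem h3) h2
      have hle : m ≤ k % m := by
        apply hmle
        refine ⟨hs, ?_⟩
        intro g hg
        rw [Finset.mem_coe, hsupp] at hg
        exact hsub g hg
      have : k % m < m := Nat.mod_lt _ hm0
      omega
  have hmn : m ∣ n := hdvd_of_sub n hTn_sub
  -- 1 ∈ T^k implies T^k ⊆ H
  have hone_sub : ∀ k : ℕ, (1 : G) ∈ T ^ k → ∀ g ∈ T ^ k, g ∈ H := by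
    intro k h1k
    have grow : ∀ j : ℕ, T ^ k ⊆ T ^ (k * (j + 1)) := by
      intro j
      induction j with
      | zero => simp
      | succ j ih =>
        calc T ^ k ⊆ T ^ (k * (j + 1)) := ih
          _ ⊆ T ^ (k * (j + 1)) * T ^ k := Finset.subset_mul_left _ h1k
          _ = T ^ (k * (j + 2)) := by rw [← pow_add]; ring_nf
    intro g hg
    have hg2 : g ∈ T ^ (n * k) := by
      have h := grow (n - 1) hg
      rwa [show k * (n - 1 + 1) = n * k by rw [Nat.sub_add_cancel hn0]; ring] at h
    exact hmul_sub n hTn_sub k g hg2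
  have hdvd_of_one : ∀ k : ℕ, (1 : G) ∈ T ^ k → m ∣ k :=
    fun k h1 => hdvd_of_sub k (hone_sub k h1)
  -- every element of H is in some T^(j*n)
  have hH_mem : ∀ g : G, g ∈ H → ∃ j : ℕ, g ∈ T ^ (j * n) := by
    let K : Subgroup G :=
      { carrier := {g | ∃ j : ℕ, g ∈ T ^ (j * n)}
        one_mem' := ⟨0, by simp⟩
        mul_mem' := by
          rintro a b ⟨j, hj⟩ ⟨j', hj'⟩
          exact ⟨j + j', by rw [add_mul, pow_add]; exact Finset.mul_mem_mul hj hj'⟩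
        inv_mem' := by
          rintro a ⟨j, hj⟩
          refine ⟨j * (Fintype.card G - 1), ?_⟩
          have hcard : 0 < Fintype.card G := Fintype.card_pos
          have ha : a⁻¹ = a ^ (Fintype.card G - 1) := by
            have h : a * a ^ (Fintype.card G - 1) = 1 := by
              rw [← pow_succ', Nat.sub_add_cancel hcard, pow_card_eq_one]
            exact inv_eq_of_mul_eq_one_right h
          rw [ha, show j * (Fintype.card G - 1) * n = j * n * (Fintype.card G - 1) by ring,
            pow_mul]
          exact Finset.pow_mem_pow hj }
    intro g hg
    have hle : H ≤ K := by
      rw [hH]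
      apply (Subgroup.closure_le K).2
      intro g hg
      exact ⟨1, by rw [one_mul, ← hsupp]; exact_mod_cast hg⟩
    exact hle hg
  have hdvd_of_mem : ∀ k : ℕ, ∀ g ∈ T ^ k, g ∈ H → m ∣ k := by
    intro k g hg hgH
    obtain ⟨j, hj⟩ := hH_mem g⁻¹ (H.inv_mem hgH)
    have h1 : (1 : G) ∈ T ^ (k + j * n) := by
      rw [pow_add]
      have h := Finset.mul_mem_mul hg hj
      simpa using h
    have hd := hdvd_of_one _ h1
    have := Nat.dvd_sub hd (hmn.mul_left j)
    simpa using this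
  -- algebra part
  have hrepr : ∀ y : MonoidAlgebra ℝ G, y = ∑ b : G, MonoidAlgebra.single b (y.coeff b) := by
    intro y
    ext g
    rw [MonoidAlgebra.coeff_sum, Finsupp.finset_sum_apply]
    simp [MonoidAlgebra.coeff_single, Finsupp.single_apply]
  have hc_single : ∀ b : G, b ∈ H → c * MonoidAlgebra.single b (1 : ℝ) = c := by
    intro b hb
    rw [hc, smul_mul_assoc, Finset.sum_mul]
    congr 1
    refine Finset.sum_equiv (Equiv.mulRight b) ?_ ?_
    · intro h
      simp only [Finset.mem_filter, Finset.mem_univ, true_and, Equiv.coe_mulRight]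
      exact (mul_mem_cancel_right hb).symm
    · intro h _
      rw [MonoidAlgebra.single_mul_single, mul_one]
      rfl
  have hcxm : c * x ^ m = c := by
    conv_lhs => rw [hrepr (x ^ m)]
    rw [Finset.mul_sum]
    have hterm : ∀ b : G, c * MonoidAlgebra.single b ((x ^ m).coeff b) = (x ^ m).coeff b • c := by
      intro b
      by_cases hb : (x ^ m).coeff b = 0
      · rw [hb]; simp
      · have hbH : b ∈ H := hms (Finset.mem_coe.2 (Finsupp.mem_support_iff.2 hb))
        have h2 : MonoidAlgebra.single b ((x ^ m).coeff b)
            = (x ^ m).coeff b • MonoidAlgebra.single b (1 : ℝ) := by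
          rw [MonoidAlgebra.smul_single, smul_eq_mul, mul_one]
        rw [h2, mul_smul_comm, hc_single b hbH]
    simp_rw [hterm]
    rw [← Finset.sum_smul, hsum m, one_smul]
  have hcpow : ∀ t : ℕ, c * x ^ (m * t) = c := by
    intro t
    induction t with
    | zero => rw [mul_zero, pow_zero, mul_one]
    | succ t ih => rw [mul_add, mul_one, pow_add, ← mul_assoc, ih, hcxm]
  have hkey : ∀ a b : ℕ, a ≤ b → a ≡ b [MOD m] → c * x ^ a = c * x ^ b := by
    intro a b hab hmod
    obtain ⟨t, ht⟩ := (Nat.modEq_iff_dvd' hab).1 hmod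
    have hb : b = m * t + a := by omega
    rw [hb, pow_add, ← mul_assoc, hcpow]
  have hcoeff : ∀ (r : ℕ) (g : G), (c * x ^ r).coeff g
      = (Nat.card H : ℝ)⁻¹ * ∑ h ∈ Finset.univ.filter (· ∈ H), (x ^ r).coeff (h⁻¹ * g) := by
    intro r g
    rw [hc, smul_mul_assoc, Finset.sum_mul, MonoidAlgebra.coeff_smul_apply, smul_eq_mul]
    congr 1
    rw [MonoidAlgebra.coeff_sum, Finsupp.finset_sum_apply]
    refine Finset.sum_congr rfl ?_
    intro h _
    rw [MonoidAlgebra.coeff_single_mul_apply, one_mul]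
  have hNpos : 0 < Fintype.card G := Fintype.card_pos
  constructor
  · intro heq
    obtain ⟨a, ha⟩ : (x ^ r₁).coeff.support.Nonempty := by rw [hsupp]; exact hxne.pow
    have hane : (c * x ^ r₁).coeff a ≠ 0 := by
      rw [hcoeff]
      apply mul_ne_zero
      · exact inv_ne_zero (Nat.cast_ne_zero.2 Nat.card_pos.ne')
      · apply ne_of_gt
        apply Finset.sum_pos'
        · intro h _; exact hnn r₁ _
        · refine ⟨1, by simp [H.one_mem], ?_⟩
          rw [inv_one, one_mul]
          exact lt_of_le_of_ne (hnn r₁ a) (Ne.symm (Finsupp.mem_support_iff.1 ha))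
    rw [heq, hcoeff] at hane
    have hsumne : ∑ h ∈ Finset.univ.filter (· ∈ H), (x ^ r₂).coeff (h⁻¹ * a) ≠ 0 := by
      intro h0
      rw [h0, mul_zero] at hane
      exact hane rfl
    obtain ⟨h, hhH, hhne⟩ : ∃ h ∈ Finset.univ.filter (· ∈ H), (x ^ r₂).coeff (h⁻¹ * a) ≠ 0 := by
      by_contra hcon
      push_neg at hcon
      exact hsumne (Finset.sum_eq_zero hcon)
    rw [Finset.mem_filter] at hhH
    replace hhH : h ∈ H := hhH.2
    have hbT : h⁻¹ * a ∈ T ^ r₂ := by rw [← hsupp]; exact Finsupp.mem_support_iff.2 hhne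
    have haT : a ∈ T ^ r₁ := by rw [← hsupp]; exact ha
    have hdvd1 : m ∣ r₂ * Fintype.card G := by
      apply hdvd_of_one
      have hmem : (h⁻¹ * a) ^ Fintype.card G ∈ (T ^ r₂) ^ Fintype.card G :=
        Finset.pow_mem_pow hbT
      rw [← pow_mul] at hmem
      rwa [pow_card_eq_one] at hmem
    have hdvd2 : m ∣ r₁ + r₂ * (Fintype.card G - 1) := by
      apply hdvd_of_mem _ (a * (h⁻¹ * a) ^ (Fintype.card G - 1))
      · rw [pow_add, pow_mul]
        exact Finset.mul_mem_mul haT (Finset.pow_mem_pow hbT)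
      · have heqh : a * (h⁻¹ * a) ^ (Fintype.card G - 1) = h := by
          calc a * (h⁻¹ * a) ^ (Fintype.card G - 1)
              = h * ((h⁻¹ * a) * (h⁻¹ * a) ^ (Fintype.card G - 1)) := by
                rw [← mul_assoc, mul_inv_cancel_left]
            _ = h := by
                rw [← pow_succ', Nat.sub_add_cancel hNpos, pow_card_eq_one, mul_one]
        rw [heqh]
        exact hhH
    rw [Nat.modEq_iff_dvd]
    have hkey2 : (r₂ : ℤ) - (r₁ : ℤ) = ((r₂ * Fintype.card G : ℕ) : ℤ)
        - ((r₁ + r₂ * (Fintype.card G - 1) : ℕ) : ℤ) := by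
      have h1 : ((Fintype.card G - 1 : ℕ) : ℤ) = (Fintype.card G : ℤ) - 1 :=
        Nat.cast_sub hNpos
      push_cast [h1]
      ring
    rw [hkey2]
    exact dvd_sub (Int.natCast_dvd_natCast.2 hdvd1) (Int.natCast_dvd_natCast.2 hdvd2)
  · intro hmod
    rcases le_total r₁ r₂ with hle | hle
    · exact hkey r₁ r₂ hle hmod
    · exact (hkey r₂ r₁ hle hmod.symm).symm
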